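/- The map ρ₂ : (c₁,…,c_p) ↦ (c₁−1,…,c_p−1) is a graph automorphism of Λ_{(p,q)}, and the automorphisms ρ₁, ρ₂ of Λ_{(p,q)} satisfy ρ₁ρ₂ = ρ₂ρ₁ and ρ₁^p = ρ₂^q. -/

import Mathlib

/-- The vertex set `Λ⁰_{(p,q)} = {(c₁,…,c_p) ∈ ℤ^p : c₁ ≤ ⋯ ≤ c_p ≤ c₁ + q}`
(written index-free: monotone and any two entries differ by at most `q`). -/
def Lam0 (p q : ℕ) : Set (Fin p → ℤ) :=
  {c | (∀ i j : Fin p, i ≤ j → c i ≤ c j) ∧ ∀ i j : Fin p, c i ≤ c j + q}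

/-- The graph `Λ_{(p,q)}`: vertices `Λ⁰_{(p,q)}`, edges between tuples at ℓ¹-distance 1. -/
def LamGraph (p q : ℕ) : SimpleGraph (Lam0 p q) where
  Adj u v := ∑ i, ((u : Fin p → ℤ) i - (v : Fin p → ℤ) i).natAbs = 1
  symm := by
    constructor
    intro u v h
    have e : ∀ i, ((v : Fin p → ℤ) i - (u : Fin p → ℤ) i).natAbs
        = ((u : Fin p → ℤ) i - (v : Fin p → ℤ) i).natAbs := fun i => by rw [← Int.natAbs_neg, neg_sub]
    simpa [e] using h
  loopless := by constructor; intro u h; simp at h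

/-- The map `ρ₁ : (c₁,…,c_p) ↦ (c_p − q, c₁, …, c_{p−1})`. -/
def rho1 (q : ℕ) {p : ℕ} (c : Fin p → ℤ) : Fin p → ℤ := fun i =>
  if h : (i : ℕ) = 0 then
    c ⟨p - 1, Nat.sub_lt i.pos one_pos⟩ - q
  else
    c ⟨(i : ℕ) - 1, Nat.lt_of_le_of_lt (Nat.sub_le _ _) i.isLt⟩

/-- The map `ρ₂ : (c₁,…,c_p) ↦ (c₁−1,…,c_p−1)`. -/
def rho2 {p : ℕ} (c : Fin p → ℤ) : Fin p → ℤ := fun i => c i - 1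

lemma rho2_iter {p : ℕ} (k : ℕ) (c : Fin p → ℤ) (i : Fin p) :
    (rho2 (p := p))^[k] c i = c i - k := by
  induction k generalizing c with
  | zero => simp
  | succ n ih =>
      rw [Function.iterate_succ_apply]
      rw [ih]
      simp [rho2]
      ring

lemma rho1_iter {p q : ℕ} (k : ℕ) (hk : k ≤ p) (c : Fin p → ℤ) (i : Fin p) :
    (rho1 q)^[k] c i =
      if h : (i : ℕ) < k then c ⟨(i : ℕ) + p - k, by omega⟩ - q
      else c ⟨(i : ℕ) - k, by omega⟩ := by
  induction k generalizing i with
  | zero => simp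
  | succ n ih =>
      rw [Function.iterate_succ_apply', rho1]
      by_cases h0 : (i : ℕ) = 0
      · rw [dif_pos h0, ih (by omega)]
        have hi := i.isLt
        have hpn : ¬ (p - 1 < n) := by omega
        rw [dif_neg hpn, dif_pos (by omega)]
        have : p - 1 - n = (i : ℕ) + p - (n + 1) := by omega
        simp only [this]
      · rw [dif_neg h0, ih (by omega)]
        have hi := i.isLt
        by_cases h1 : (i : ℕ) - 1 < n
        · rw [dif_pos h1, dif_pos (by omega)]
          congr 2
          · ext; simp; omega
        · rw [dif_neg h1, dif_neg (by omega)]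
          congr 1
          ext; simp; omega

/-- `ρ₂` is a graph automorphism of `Λ_{(p,q)}`, and the automorphisms
`ρ₁, ρ₂` satisfy `ρ₁ρ₂ = ρ₂ρ₁` and `ρ₁^p = ρ₂^q`. -/
theorem rho2_automorphism_and_relations (p q : ℕ) (hp : 1 ≤ p) (hq : 1 ≤ q) :
    Set.BijOn (rho2 (p := p)) (Lam0 p q) (Lam0 p q) ∧
    (∀ u ∈ Lam0 p q, ∀ v ∈ Lam0 p q,
      ((∑ i, (u i - v i).natAbs = 1) ↔ (∑ i, (rho2 u i - rho2 v i).natAbs = 1))) ∧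
    (∀ c : Fin p → ℤ, rho1 q (rho2 c) = rho2 (rho1 q c)) ∧
    (∀ c : Fin p → ℤ, (rho1 q)^[p] c = (rho2 (p := p))^[q] c) := by
  refine ⟨⟨?_, ?_, ?_⟩, ?_, ?_, ?_⟩
  · rintro c ⟨h1, h2⟩
    refine ⟨fun i j hij => ?_, fun i j => ?_⟩
    · simp only [rho2]; have := h1 i j hij; omega
    · simp only [rho2]; have := h2 i j; omega
  · intro a _ b _ hab
    funext i
    have := congrFun hab i
    simp only [rho2] at this
    linarith
  · rintro c ⟨h1, h2⟩
    refine ⟨fun i => c i + 1, ⟨fun i j hij => ?_, fun i j => ?_⟩, ?_⟩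
    · have := h1 i j hij; dsimp only; omega
    · have := h2 i j; dsimp only; omega
    · funext i; simp [rho2]
  · intro u _ v _
    have : ∀ i, (rho2 u i - rho2 v i) = u i - v i := fun i => by simp [rho2]
    simp [this]
  · intro c
    funext i
    simp only [rho1, rho2]
    split_ifs <;> ring
  · intro c
    funext i
    rw [rho2_iter, rho1_iter p le_rfl, dif_pos i.isLt]
    simp only [Nat.add_sub_cancel, Fin.eta]
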